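/- For the complex polynomial f: ℂ² → ℂ, f(x,y) = x(x²+1)², the value 0 belongs to the set of asymptotic critical values K_∞(f). Consequently, for the polynomial x(x²+1)², the set K_∞ of the real polynomial differs from ℝ ∩ K_∞ of its complexification. -/

import Mathlib

open Filter

lemma deriv_g {𝕜 : Type*} [NontriviallyNormedField 𝕜] (x : 𝕜) :
    HasDerivAt (fun x : 𝕜 => x * (x ^ 2 + 1) ^ 2)
      (1 * (x ^ 2 + 1) ^ 2 + x * (2 * (x ^ 2 + 1) ^ 1 * (2 * x ^ 1 * 1))) x :=
  (hasDerivAt_id x).mul ((((hasDerivAt_id x).pow 2).add_const 1).pow 2)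

lemma fderiv_f {𝕜 : Type*} [NontriviallyNormedField 𝕜] (p : 𝕜 × 𝕜) :
    HasFDerivAt (fun p : 𝕜 × 𝕜 => p.1 * (p.1 ^ 2 + 1) ^ 2)
      ((1 * (p.1 ^ 2 + 1) ^ 2 + p.1 * (2 * (p.1 ^ 2 + 1) ^ 1 * (2 * p.1 ^ 1 * 1))) •
        ContinuousLinearMap.fst 𝕜 𝕜 𝕜) p :=
  (deriv_g p.1).comp_hasFDerivAt p (hasFDerivAt_fst)

lemma fderiv_zero_at_I (c : ℂ) :
    fderiv ℂ (fun p : ℂ × ℂ => p.1 * (p.1 ^ 2 + 1) ^ 2) (Complex.I, c) = 0 := by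
  have h := fderiv_f (𝕜 := ℂ) (Complex.I, c)
  have h0 : (1 * ((Complex.I : ℂ) ^ 2 + 1) ^ 2 +
      Complex.I * (2 * (Complex.I ^ 2 + 1) ^ 1 * (2 * Complex.I ^ 1 * 1))) = 0 := by
    simp [Complex.I_sq]
  rw [h0] at h
  rw [h.fderiv]
  exact zero_smul ℂ (ContinuousLinearMap.fst ℂ ℂ ℂ)

lemma real_fderiv_big (p : ℝ × ℝ) :
    1 ≤ ‖fderiv ℝ (fun p : ℝ × ℝ => p.1 * (p.1 ^ 2 + 1) ^ 2) p‖ := by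
  have h := (fderiv_f (𝕜 := ℝ) p).fderiv
  set d : ℝ := 1 * (p.1 ^ 2 + 1) ^ 2 + p.1 * (2 * (p.1 ^ 2 + 1) ^ 1 * (2 * p.1 ^ 1 * 1)) with hd
  have hd1 : 1 ≤ |d| := by
    have : d = (p.1 ^ 2 + 1) * (5 * p.1 ^ 2 + 1) := by rw [hd]; ring
    rw [this, abs_of_nonneg (by nlinarith [sq_nonneg p.1])]
    nlinarith [sq_nonneg p.1]
  have happ : (d • ContinuousLinearMap.fst ℝ ℝ ℝ) ((1 : ℝ), (0 : ℝ)) = d := by simp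
  have hle := (d • ContinuousLinearMap.fst ℝ ℝ ℝ).le_opNorm ((1 : ℝ), (0 : ℝ))
  rw [happ] at hle
  have hn : ‖((1 : ℝ), (0 : ℝ))‖ = 1 := by simp [Prod.norm_def]
  rw [hn, mul_one] at hle
  rw [h]
  calc (1 : ℝ) ≤ |d| := hd1
    _ = ‖d‖ := rfl
    _ ≤ _ := hle

/-- For the complex polynomial `f(x,y) = x(x²+1)²`, the value `0` is an asymptotic
critical value of `f` over `ℂ`; consequently the set `K_∞` of the real polynomial
`x(x²+1)²` differs from `ℝ ∩ K_∞` of its complexification. -/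
theorem Kinfty_complex_example :
    (∃ u : ℕ → ℂ × ℂ,
      Tendsto (fun ν => ‖u ν‖) atTop atTop ∧
      Tendsto (fun ν => (u ν).1 * ((u ν).1 ^ 2 + 1) ^ 2) atTop (nhds 0) ∧
      Tendsto (fun ν => ‖u ν‖ *
        ‖fderiv ℂ (fun p : ℂ × ℂ => p.1 * (p.1 ^ 2 + 1) ^ 2) (u ν)‖) atTop (nhds 0)) ∧
    {y : ℝ | ∃ u : ℕ → ℝ × ℝ,
      Tendsto (fun ν => ‖u ν‖) atTop atTop ∧
      Tendsto (fun ν => (u ν).1 * ((u ν).1 ^ 2 + 1) ^ 2) atTop (nhds y) ∧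
      Tendsto (fun ν => ‖u ν‖ *
        ‖fderiv ℝ (fun p : ℝ × ℝ => p.1 * (p.1 ^ 2 + 1) ^ 2) (u ν)‖) atTop (nhds 0)} ≠
    {y : ℝ | ∃ u : ℕ → ℂ × ℂ,
      Tendsto (fun ν => ‖u ν‖) atTop atTop ∧
      Tendsto (fun ν => (u ν).1 * ((u ν).1 ^ 2 + 1) ^ 2) atTop (nhds (y : ℂ)) ∧
      Tendsto (fun ν => ‖u ν‖ *
        ‖fderiv ℂ (fun p : ℂ × ℂ => p.1 * (p.1 ^ 2 + 1) ^ 2) (u ν)‖) atTop (nhds 0)} := by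
  have witness : ∃ u : ℕ → ℂ × ℂ,
      Tendsto (fun ν => ‖u ν‖) atTop atTop ∧
      Tendsto (fun ν => (u ν).1 * ((u ν).1 ^ 2 + 1) ^ 2) atTop (nhds 0) ∧
      Tendsto (fun ν => ‖u ν‖ *
        ‖fderiv ℂ (fun p : ℂ × ℂ => p.1 * (p.1 ^ 2 + 1) ^ 2) (u ν)‖) atTop (nhds 0) := by
    refine ⟨fun ν => (Complex.I, (ν : ℂ)), ?_, ?_, ?_⟩
    · refine tendsto_atTop_mono (fun ν => ?_) tendsto_natCast_atTop_atTop
      have : ‖((ν : ℂ))‖ = (ν : ℝ) := by simp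
      calc (ν : ℝ) = ‖((ν : ℂ))‖ := this.symm
        _ ≤ ‖(Complex.I, (ν : ℂ))‖ := by
            rw [Prod.norm_def]; exact le_max_right _ _
    · have : (fun ν : ℕ => Complex.I * (Complex.I ^ 2 + 1) ^ 2) = fun _ => (0 : ℂ) := by
        funext ν; simp [Complex.I_sq]
      rw [this]
      exact tendsto_const_nhds
    · have : (fun ν : ℕ => ‖((Complex.I, (ν : ℂ)) : ℂ × ℂ)‖ *
          ‖fderiv ℂ (fun p : ℂ × ℂ => p.1 * (p.1 ^ 2 + 1) ^ 2) (Complex.I, (ν : ℂ))‖)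
          = fun _ => (0 : ℝ) := by
        funext ν; rw [fderiv_zero_at_I]; simp
      rw [this]
      exact tendsto_const_nhds
  refine ⟨witness, ?_⟩
  intro hset
  have h0 : (0 : ℝ) ∈ {y : ℝ | ∃ u : ℕ → ℂ × ℂ,
      Tendsto (fun ν => ‖u ν‖) atTop atTop ∧
      Tendsto (fun ν => (u ν).1 * ((u ν).1 ^ 2 + 1) ^ 2) atTop (nhds (y : ℂ)) ∧
      Tendsto (fun ν => ‖u ν‖ *
        ‖fderiv ℂ (fun p : ℂ × ℂ => p.1 * (p.1 ^ 2 + 1) ^ 2) (u ν)‖) atTop (nhds 0)} := by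
    obtain ⟨u, h1, h2, h3⟩ := witness
    exact ⟨u, h1, by simpa using h2, h3⟩
  rw [← hset] at h0
  obtain ⟨u, h1, _, h3⟩ := h0
  have hbig : Tendsto (fun ν => ‖u ν‖ *
      ‖fderiv ℝ (fun p : ℝ × ℝ => p.1 * (p.1 ^ 2 + 1) ^ 2) (u ν)‖) atTop atTop := by
    refine tendsto_atTop_mono (fun ν => ?_) h1
    have := real_fderiv_big (u ν)
    nlinarith [norm_nonneg (u ν)]
  exact not_tendsto_nhds_of_tendsto_atTop hbig 0 h3
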